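/- Let M : ℝ^m → ℝ^p be continuous, D ∈ ℝ^{m×m} injective, 0 < q ≤ 2 fixed, B ∈ ℝ^p. Let B_j ∈ ℝ^p and δ_j > 0 satisfy ‖B − B_j‖₂ ≤ δ_j with δ_j → 0, and let γ_j > 0 satisfy γ_j → 0 and δ_j²/γ_j → 0. Suppose the set S = {x ≥ 0 : M(x) = B} is nonempty, and for each j let x_j be a global minimizer of J_j(x) = (1/2)‖M(x) − B_j‖₂² + (γ_j/q)‖Dx‖_q^q over the nonnegative cone. Then {x_j} has a convergent subsequence, and every limit point x* of {x_j} satisfies x* ≥ 0, M(x*) = B, and ‖Dx*‖_q^q = min{‖Dx‖_q^q : x ≥ 0, M(x) = B}. -/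

import Mathlib

open Finset Filter

/-- auxiliary: the regularization functional `‖D z‖_q^q`. -/
noncomputable def Gq (m : ℕ) (D : Matrix (Fin m) (Fin m) ℝ) (q : ℝ) (z : Fin m → ℝ) : ℝ :=
  ∑ i, |D.mulVec z i| ^ q

lemma Gq_nonneg (m : ℕ) (D : Matrix (Fin m) (Fin m) ℝ) (q : ℝ) (z : Fin m → ℝ) :
    0 ≤ Gq m D q z :=
  Finset.sum_nonneg fun _ _ => Real.rpow_nonneg (abs_nonneg _) _

lemma Gq_continuous (m : ℕ) (D : Matrix (Fin m) (Fin m) ℝ) (q : ℝ) (hq0 : 0 < q) :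
    Continuous (Gq m D q) := by
  apply continuous_finset_sum
  intro i _
  have h1 : Continuous fun z : Fin m → ℝ => |D.mulVec z i| := by
    apply continuous_abs.comp
    simp only [Matrix.mulVec, dotProduct]
    exact continuous_finset_sum _ fun k _ => continuous_const.mul (continuous_apply k)
  rw [continuous_iff_continuousAt]
  intro z
  exact (Real.continuousAt_rpow_const _ _ (Or.inr hq0.le)).comp h1.continuousAt

theorem stmt5 (m p : ℕ) (M : (Fin m → ℝ) → (Fin p → ℝ)) (hM : Continuous M)
    (D : Matrix (Fin m) (Fin m) ℝ) (hD : Function.Injective D.mulVec)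
    (q : ℝ) (hq0 : 0 < q) (hq2 : q ≤ 2)
    (B : Fin p → ℝ) (Bj : ℕ → Fin p → ℝ) (δ γ : ℕ → ℝ)
    (hδpos : ∀ j, 0 < δ j) (hγpos : ∀ j, 0 < γ j)
    (hBj : ∀ j, Real.sqrt (∑ i, (B i - Bj j i) ^ 2) ≤ δ j)
    (hδ : Tendsto δ atTop (nhds 0))
    (hγ : Tendsto γ atTop (nhds 0))
    (hδγ : Tendsto (fun j => (δ j) ^ 2 / γ j) atTop (nhds 0))
    (hS : ∃ x : Fin m → ℝ, (∀ i, 0 ≤ x i) ∧ M x = B)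
    (x : ℕ → Fin m → ℝ)
    (hxpos : ∀ j i, 0 ≤ x j i)
    (hxmin : ∀ j, ∀ y : Fin m → ℝ, (∀ i, 0 ≤ y i) →
      (1 / 2) * ∑ i, (M (x j) i - Bj j i) ^ 2 +
          (γ j / q) * ∑ i, |D.mulVec (x j) i| ^ q ≤
        (1 / 2) * ∑ i, (M y i - Bj j i) ^ 2 +
          (γ j / q) * ∑ i, |D.mulVec y i| ^ q) :
    (∃ (φ : ℕ → ℕ) (xstar : Fin m → ℝ), StrictMono φ ∧
        Tendsto (fun k => x (φ k)) atTop (nhds xstar)) ∧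
    ∀ xstar : Fin m → ℝ,
      (∃ φ : ℕ → ℕ, StrictMono φ ∧
        Tendsto (fun k => x (φ k)) atTop (nhds xstar)) →
      (∀ i, 0 ≤ xstar i) ∧ M xstar = B ∧
        ∀ y : Fin m → ℝ, (∀ i, 0 ≤ y i) → M y = B →
          ∑ i, |D.mulVec xstar i| ^ q ≤ ∑ i, |D.mulVec y i| ^ q := by
  obtain ⟨xd, hxd_nonneg, hxd_eq⟩ := hS
  have hq0' : q ≠ 0 := ne_of_gt hq0
  have hGnonneg := Gq_nonneg m D q
  have hGcont := Gq_continuous m D q hq0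
  -- squared data error bound
  have hBsq : ∀ j, ∑ i, (B i - Bj j i) ^ 2 ≤ (δ j) ^ 2 := by
    intro j
    have h := hBj j
    have h0 : 0 ≤ ∑ i, (B i - Bj j i) ^ 2 := Finset.sum_nonneg fun i _ => sq_nonneg _
    nlinarith [Real.sq_sqrt h0, Real.sqrt_nonneg (∑ i, (B i - Bj j i) ^ 2),
      (hδpos j).le]
  -- the key inequality
  have key : ∀ j, ∀ y : Fin m → ℝ, (∀ i, 0 ≤ y i) → M y = B →
      (1 / 2) * ∑ i, (M (x j) i - Bj j i) ^ 2 + (γ j / q) * Gq m D q (x j) ≤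
        (δ j) ^ 2 / 2 + (γ j / q) * Gq m D q y := by
    intro j y hy hyB
    have h : (1 / 2) * ∑ i, (M (x j) i - Bj j i) ^ 2 + (γ j / q) * Gq m D q (x j) ≤
        (1 / 2) * ∑ i, (M y i - Bj j i) ^ 2 + (γ j / q) * Gq m D q y := hxmin j y hy
    rw [hyB] at h
    have := hBsq j
    linarith
  have hγq : ∀ j, 0 < γ j / q := fun j => div_pos (hγpos j) hq0
  -- bound on the regularization term
  have hGb : ∀ j, ∀ y : Fin m → ℝ, (∀ i, 0 ≤ y i) → M y = B →
      Gq m D q (x j) ≤ q / 2 * ((δ j) ^ 2 / γ j) + Gq m D q y := by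
    intro j y hy hyB
    have h := key j y hy hyB
    have hA : 0 ≤ (1 / 2) * ∑ i, (M (x j) i - Bj j i) ^ 2 := by
      have : 0 ≤ ∑ i, (M (x j) i - Bj j i) ^ 2 :=
        Finset.sum_nonneg fun i _ => sq_nonneg _
      linarith
    rw [← mul_le_mul_iff_right₀ (hγq j)]
    have heq : γ j / q * (q / 2 * ((δ j) ^ 2 / γ j) + Gq m D q y) =
        (δ j) ^ 2 / 2 + γ j / q * Gq m D q y := by
      have hγ0 : γ j ≠ 0 := (hγpos j).ne'
      field_simp
    rw [heq]
    linarith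
  -- bound on the data term
  have hAb : ∀ j, ∑ i, (M (x j) i - Bj j i) ^ 2 ≤ (δ j) ^ 2 + γ j * (2 / q * Gq m D q xd) := by
    intro j
    have h := key j xd hxd_nonneg hxd_eq
    have hG0 : 0 ≤ γ j / q * Gq m D q (x j) := mul_nonneg (hγq j).le (hGnonneg _)
    have heq : γ j / q * Gq m D q xd = γ j * (2 / q * Gq m D q xd) / 2 := by ring
    nlinarith
  -- limits of the error terms
  have hδ2 : Tendsto (fun j => (δ j) ^ 2) atTop (nhds 0) := by
    have := hδ.mul hδ
    simpa [pow_two] using this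
  have hAtend : Tendsto (fun j => ∑ i, (M (x j) i - Bj j i) ^ 2) atTop (nhds 0) := by
    apply squeeze_zero (fun j => Finset.sum_nonneg fun i _ => sq_nonneg _) hAb
    have h2 : Tendsto (fun j => γ j * (2 / q * Gq m D q xd)) atTop (nhds 0) := by
      simpa using hγ.mul_const (2 / q * Gq m D q xd)
    simpa using hδ2.add h2
  -- M (x j) → B coordinatewise
  have hMi : ∀ i, Tendsto (fun j => M (x j) i) atTop (nhds (B i)) := by
    intro i
    have ha2 : Tendsto (fun j => (M (x j) i - Bj j i) ^ 2) atTop (nhds 0) := by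
      apply squeeze_zero (fun j => sq_nonneg _) _ hAtend
      intro j
      exact Finset.single_le_sum (fun i _ => sq_nonneg (M (x j) i - Bj j i)) (Finset.mem_univ i)
    have ha : Tendsto (fun j => M (x j) i - Bj j i) atTop (nhds 0) := by
      rw [tendsto_zero_iff_abs_tendsto_zero]
      have := (Real.continuous_sqrt.tendsto 0).comp ha2
      simp only [Function.comp_def, Real.sqrt_sq_eq_abs, Real.sqrt_zero] at this
      exact this
    have hb : Tendsto (fun j => Bj j i - B i) atTop (nhds 0) := by
      rw [tendsto_zero_iff_abs_tendsto_zero]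
      apply squeeze_zero (fun j => abs_nonneg _) _ hδ
      intro j
      have h1 : (B i - Bj j i) ^ 2 ≤ (δ j) ^ 2 :=
        le_trans (Finset.single_le_sum (fun i _ => sq_nonneg (B i - Bj j i))
          (Finset.mem_univ i)) (hBsq j)
      have : |Bj j i - B i| = Real.sqrt ((B i - Bj j i) ^ 2) := by
        rw [Real.sqrt_sq_eq_abs, abs_sub_comm]
      rw [this]
      calc Real.sqrt ((B i - Bj j i) ^ 2) ≤ Real.sqrt ((δ j) ^ 2) := Real.sqrt_le_sqrt h1
        _ = δ j := Real.sqrt_sq (hδpos j).le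
    have heq : (fun j => M (x j) i) = fun j => (M (x j) i - Bj j i) + (Bj j i - B i) + B i := by
      funext j; ring
    rw [heq]
    simpa using (ha.add hb).add (tendsto_const_nhds (x := B i))
  have hMtend : Tendsto (fun j => M (x j)) atTop (nhds B) := tendsto_pi_nhds.mpr hMi
  -- boundedness of x j
  have hGbd : ∀ j, Gq m D q (x j) ≤ q / 2 * ((δ j) ^ 2 / γ j) + Gq m D q xd :=
    fun j => hGb j xd hxd_nonneg hxd_eq
  have htb : Tendsto (fun j => q / 2 * ((δ j) ^ 2 / γ j) + Gq m D q xd) atTop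
      (nhds (Gq m D q xd)) := by
    simpa using (hδγ.const_mul (q / 2)).add (tendsto_const_nhds (x := Gq m D q xd))
  obtain ⟨R, hR⟩ := htb.bddAbove_range
  have hR' : ∀ j, Gq m D q (x j) ≤ max R 0 := by
    intro j
    exact le_trans (le_trans (hGbd j) (hR (Set.mem_range_self j))) (le_max_left _ _)
  set R1 : ℝ := (max R 0) ^ (1 / q) with hR1
  have hR1nn : 0 ≤ R1 := Real.rpow_nonneg (le_max_right R 0) _
  have hDxb : ∀ j, ‖D.mulVec (x j)‖ ≤ R1 := by
    intro j
    rw [pi_norm_le_iff_of_nonneg hR1nn]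
    intro i
    rw [Real.norm_eq_abs]
    have h1 : |D.mulVec (x j) i| ^ q ≤ max R 0 := by
      refine le_trans ?_ (hR' j)
      exact Finset.single_le_sum
        (fun i _ => Real.rpow_nonneg (abs_nonneg (D.mulVec (x j) i)) q) (Finset.mem_univ i)
    have h2 : (|D.mulVec (x j) i| ^ q) ^ (1 / q) ≤ R1 :=
      Real.rpow_le_rpow (Real.rpow_nonneg (abs_nonneg _) _) h1 (by positivity)
    have h3 : (|D.mulVec (x j) i| ^ q) ^ (1 / q) = |D.mulVec (x j) i| := by
      rw [← Real.rpow_mul (abs_nonneg _), mul_one_div, div_self hq0', Real.rpow_one]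
    rwa [h3] at h2
  -- inverse of D
  have hDinj : Function.Injective (D.mulVecLin) := by
    intro a b h
    exact hD (by simpa [Matrix.mulVecLin_apply] using h)
  have hDbij : Function.Bijective (D.mulVecLin) :=
    ⟨hDinj, (LinearMap.injective_iff_surjective).mp hDinj⟩
  set e : (Fin m → ℝ) ≃ₗ[ℝ] (Fin m → ℝ) := LinearEquiv.ofBijective D.mulVecLin hDbij with he
  set einv : (Fin m → ℝ) →L[ℝ] (Fin m → ℝ) :=
    LinearMap.toContinuousLinearMap (e.symm : (Fin m → ℝ) →ₗ[ℝ] (Fin m → ℝ)) with heinv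
  have hxj : ∀ j, x j = einv (D.mulVec (x j)) := by
    intro j
    have : D.mulVec (x j) = e (x j) := by
      simp [he, LinearEquiv.ofBijective_apply, Matrix.mulVecLin_apply]
    rw [this]
    simp [heinv]
  have hxb : ∀ j, ‖x j‖ ≤ ‖einv‖ * R1 := by
    intro j
    rw [hxj j]
    calc ‖einv (D.mulVec (x j))‖ ≤ ‖einv‖ * ‖D.mulVec (x j)‖ := einv.le_opNorm _
      _ ≤ ‖einv‖ * R1 := by
          exact mul_le_mul_of_nonneg_left (hDxb j) (norm_nonneg _)
  -- convergent subsequence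
  have hmem : ∀ j, x j ∈ Metric.closedBall (0 : Fin m → ℝ) (‖einv‖ * R1) := by
    intro j
    rw [Metric.mem_closedBall, dist_zero_right]
    exact hxb j
  obtain ⟨xs, _, φ, hφ, hconv⟩ :=
    (isCompact_closedBall (0 : Fin m → ℝ) (‖einv‖ * R1)).tendsto_subseq hmem
  constructor
  · exact ⟨φ, xs, hφ, hconv⟩
  rintro xstar ⟨ψ, hψ, hψconv⟩
  have hψtop : Tendsto ψ atTop atTop := hψ.tendsto_atTop
  refine ⟨?_, ?_, ?_⟩
  · intro i
    have h1 : Tendsto (fun k => x (ψ k) i) atTop (nhds (xstar i)) :=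
      tendsto_pi_nhds.mp hψconv i
    exact ge_of_tendsto' h1 fun k => hxpos (ψ k) i
  · have h1 : Tendsto (fun k => M (x (ψ k))) atTop (nhds (M xstar)) :=
      (hM.tendsto xstar).comp hψconv
    have h2 : Tendsto (fun k => M (x (ψ k))) atTop (nhds B) := hMtend.comp hψtop
    exact tendsto_nhds_unique h1 h2
  · intro y hy hyB
    have h1 : Tendsto (fun k => Gq m D q (x (ψ k))) atTop (nhds (Gq m D q xstar)) :=
      (hGcont.tendsto xstar).comp hψconv
    have h2 : Tendsto (fun k => q / 2 * ((δ (ψ k)) ^ 2 / γ (ψ k)) + Gq m D q y) atTop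
        (nhds (Gq m D q y)) := by
      simpa using ((hδγ.comp hψtop).const_mul (q / 2)).add
        (tendsto_const_nhds (x := Gq m D q y))
    exact le_of_tendsto_of_tendsto' h1 h2 fun k => hGb (ψ k) y hy hyB
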